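/- Let G be a group, B a G-invariant Boolean algebra of subsets of G satisfying the definability-of-types condition, and S the Stone space of B. Then G is 'extremely amenable for B' (there exists a G-fixed ultrafilter in S) if and only if every left generic Y ∈ B satisfies Y Y⁻¹ = G. -/

import Mathlib

/-- The left translate `gY` of a subset of a group. -/
def LTrans {G : Type*} [Group G] (g : G) (Y : Set G) : Set G := (g * ·) '' Y

/-- `B` is a Boolean algebra of subsets of `G` closed under left translations. -/
def IsInvBoolAlg {G : Type*} [Group G] (B : Set (Set G)) : Prop :=
  Set.univ ∈ B ∧ (∀ Y ∈ B, Yᶜ ∈ B) ∧ (∀ Y ∈ B, ∀ Z ∈ B, Y ∩ Z ∈ B) ∧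
    ∀ (g : G), ∀ Y ∈ B, LTrans g Y ∈ B

/-- `p` is an ultrafilter on the Boolean algebra `B` of subsets. -/
def IsUltraOn {α : Type*} (B p : Set (Set α)) : Prop :=
  p ⊆ B ∧ Set.univ ∈ p ∧ ∅ ∉ p ∧ (∀ Y ∈ p, ∀ Z ∈ p, Y ∩ Z ∈ p) ∧
    (∀ Y ∈ p, ∀ Z ∈ B, Y ⊆ Z → Z ∈ p) ∧ ∀ Y ∈ B, Y ∈ p ∨ Yᶜ ∈ p

/-- `Y` is left generic: finitely many left translates of `Y` cover `G`. -/
def IsLeftGeneric {G : Type*} [Group G] (Y : Set G) : Prop :=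
  ∃ F : Finset G, ⋃ g ∈ F, LTrans g Y = Set.univ

/-- The set `Y · Y⁻¹ = {a b⁻¹ : a, b ∈ Y}`. -/
def MulInvSet {G : Type*} [Group G] (Y : Set G) : Set G :=
  {x | ∃ a ∈ Y, ∃ b ∈ Y, x = a * b⁻¹}

/-- The Stone space of the Boolean algebra `B`: the set of ultrafilters on `B`. -/
abbrev StoneS {α : Type*} (B : Set (Set α)) : Type _ := {p : Set (Set α) // IsUltraOn B p}

/-- The Stone topology, generated by the basic (cl)open sets `{p : Y ∈ p}`, `Y ∈ B`. -/
instance stoneTop {α : Type*} (B : Set (Set α)) : TopologicalSpace (StoneS B) :=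
  TopologicalSpace.generateFrom {U | ∃ Y ∈ B, U = {p : StoneS B | Y ∈ p.1}}

/-- The translation action of `G` on ultrafilters: `Y ∈ g·p ↔ g⁻¹Y ∈ p`. -/
def actUF {G : Type*} [Group G] (g : G) (p : Set (Set G)) : Set (Set G) :=
  {Y | LTrans g⁻¹ Y ∈ p}

/-- `M` is a `G`-subflow of the Stone space: nonempty, closed and `G`-invariant. -/
def IsSubflow {G : Type*} [Group G] (B : Set (Set G)) (M : Set (StoneS B)) : Prop :=
  M.Nonempty ∧ IsClosed M ∧ ∀ (g : G), ∀ q ∈ M, ∃ q' ∈ M, q'.1 = actUF g q.1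

/-- `M` is a minimal `G`-subflow of the Stone space. -/
def IsMinSubflow {G : Type*} [Group G] (B : Set (Set G)) (M : Set (StoneS B)) : Prop :=
  IsSubflow B M ∧ ∀ M' ⊆ M, IsSubflow B M' → M' = M

set_option linter.unusedSectionVars false
set_option maxHeartbeats 1000000

section lemmas
variable {G : Type*} [Group G]

lemma mem_LTrans {g : G} {Y : Set G} {x : G} : x ∈ LTrans g Y ↔ g⁻¹ * x ∈ Y := by
  constructor
  · rintro ⟨y, hy, rfl⟩; simpa using hy
  · intro h; exact ⟨g⁻¹ * x, h, by simp [mul_inv_cancel_left]⟩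

lemma LTrans_LTrans (g h : G) (Y : Set G) : LTrans g (LTrans h Y) = LTrans (g * h) Y := by
  ext x; simp [mem_LTrans, mul_assoc]

lemma LTrans_one (Y : Set G) : LTrans (1 : G) Y = Y := by
  ext x; simp [mem_LTrans]

lemma LTrans_compl (g : G) (Y : Set G) : LTrans g Yᶜ = (LTrans g Y)ᶜ := by
  ext x; simp [mem_LTrans]

lemma LTrans_inter (g : G) (Y Z : Set G) : LTrans g (Y ∩ Z) = LTrans g Y ∩ LTrans g Z := by
  ext x; simp [mem_LTrans]

lemma LTrans_univ (g : G) : LTrans g (Set.univ : Set G) = Set.univ := by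
  ext x; simp [mem_LTrans]

lemma LTrans_empty (g : G) : LTrans g (∅ : Set G) = ∅ := by
  ext x; simp [mem_LTrans]

lemma LTrans_mono (g : G) {Y Z : Set G} (h : Y ⊆ Z) : LTrans g Y ⊆ LTrans g Z := by
  intro x hx; rw [mem_LTrans] at *; exact h hx

variable {B : Set (Set G)}

lemma empty_mem_B (hB : IsInvBoolAlg B) : (∅ : Set G) ∈ B := by
  have := hB.2.1 _ hB.1; simpa using this

omit [Group G] in
lemma ultra_compl_mem {p : Set (Set G)} (hp : IsUltraOn B p) {Y : Set G} (hY : Y ∈ B) :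
    Yᶜ ∈ p ↔ Y ∉ p := by
  constructor
  · intro hc hY'
    have : Y ∩ Yᶜ ∈ p := hp.2.2.2.1 _ hY' _ hc
    simp at this
    exact hp.2.2.1 this
  · intro h; rcases hp.2.2.2.2.2 Y hY with h' | h'
    · exact absurd h' h
    · exact h'

lemma ultra_eq_of_subset {p q : Set (Set G)} (hp : IsUltraOn B p) (hq : IsUltraOn B q)
    (h : p ⊆ q) : p = q := by
  apply Set.Subset.antisymm h
  intro Y hY
  by_contra hYp
  have hYB : Y ∈ B := hq.1 hY
  have : Yᶜ ∈ p := (ultra_compl_mem hp hYB).2 hYp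
  have : Yᶜ ∈ q := h this
  have : Y ∩ Yᶜ ∈ q := hq.2.2.2.1 _ hY _ this
  simp at this
  exact hq.2.2.1 this

lemma actUF_ultra (hB : IsInvBoolAlg B) {p : Set (Set G)} (hp : IsUltraOn B p) (g : G) :
    IsUltraOn B (actUF g p) := by
  obtain ⟨hsub, huniv, hemp, hint, hup, hdich⟩ := hp
  refine ⟨?_, ?_, ?_, ?_, ?_, ?_⟩
  · intro Y hY
    have : LTrans g⁻¹ Y ∈ B := hsub hY
    have := hB.2.2.2 g _ this
    rwa [LTrans_LTrans, mul_inv_cancel, LTrans_one] at this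
  · show LTrans g⁻¹ Set.univ ∈ p; rwa [LTrans_univ]
  · show LTrans g⁻¹ (∅ : Set G) ∈ p → False
    rw [LTrans_empty]; exact hemp
  · intro Y hY Z hZ
    show LTrans g⁻¹ (Y ∩ Z) ∈ p
    rw [LTrans_inter]; exact hint _ hY _ hZ
  · intro Y hY Z hZ hYZ
    exact hup _ hY _ (hB.2.2.2 g⁻¹ _ hZ) (LTrans_mono _ hYZ)
  · intro Y hY
    rcases hdich _ (hB.2.2.2 g⁻¹ _ hY) with h | h
    · exact Or.inl h
    · right; show LTrans g⁻¹ Yᶜ ∈ p; rwa [LTrans_compl]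

lemma principal_ultra (hB : IsInvBoolAlg B) (x : G) :
    IsUltraOn B {Y | Y ∈ B ∧ x ∈ Y} := by
  refine ⟨fun Y hY => hY.1, ⟨hB.1, trivial⟩, fun h => h.2, ?_, ?_, ?_⟩
  · rintro Y ⟨hYB, hYx⟩ Z ⟨hZB, hZx⟩
    exact ⟨hB.2.2.1 _ hYB _ hZB, hYx, hZx⟩
  · rintro Y ⟨hYB, hYx⟩ Z hZB hYZ
    exact ⟨hZB, hYZ hYx⟩
  · intro Y hY
    by_cases hx : x ∈ Y
    · exact Or.inl ⟨hY, hx⟩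
    · exact Or.inr ⟨hB.2.1 _ hY, hx⟩

lemma biInter_mem {p : Set (Set G)} (hp : IsUltraOn B p) {ι : Type*} (F : Finset ι)
    (f : ι → Set G) (h : ∀ i ∈ F, f i ∈ p) : ⋂ i ∈ F, f i ∈ p := by
  classical
  induction F using Finset.induction_on with
  | empty => simpa using hp.2.1
  | @insert a s ha ih =>
    rw [Finset.set_biInter_insert]
    exact hp.2.2.2.1 _ (h a (Finset.mem_insert_self a s))
      _ (ih fun i hi => h i (Finset.mem_insert_of_mem hi))

end lemmas


open Topology
section topo
variable {α : Type*} (B : Set (Set α))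

lemma isOpen_basic {Y : Set α} (hY : Y ∈ B) : IsOpen {p : StoneS B | Y ∈ p.1} :=
  TopologicalSpace.isOpen_generateFrom_of_mem ⟨Y, hY, rfl⟩

open scoped Classical in
noncomputable def emb (p : StoneS B) : ↥B → Bool := fun Y => if Y.1 ∈ p.1 then true else false

lemma emb_eq_true_iff {p : StoneS B} {Y : ↥B} : emb B p Y = true ↔ Y.1 ∈ p.1 := by
  unfold emb; split <;> simp_all

lemma emb_eq_false_iff {p : StoneS B} {Y : ↥B} : emb B p Y = false ↔ Y.1 ∉ p.1 := by
  unfold emb; split <;> simp_all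

variable (hc : ∀ Y ∈ B, Yᶜ ∈ B)
include hc

lemma continuous_emb : Continuous (emb B) := by
  apply continuous_pi
  intro Y
  rw [continuous_discrete_rng]
  intro b
  cases b
  · have : (fun p : StoneS B => emb B p Y) ⁻¹' {false} = {p : StoneS B | Y.1ᶜ ∈ p.1} := by
      ext p
      simp only [Set.mem_preimage, Set.mem_singleton_iff, emb_eq_false_iff, Set.mem_setOf_eq]
      exact (ultra_compl_mem p.2 Y.2).symm
    rw [this]; exact isOpen_basic B (hc _ Y.2)
  · have : (fun p : StoneS B => emb B p Y) ⁻¹' {true} = {p : StoneS B | Y.1 ∈ p.1} := by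
      ext p; simp [emb_eq_true_iff]
    rw [this]; exact isOpen_basic B Y.2

lemma inducing_emb : IsInducing (emb B) := by
  constructor
  apply le_antisymm
  · have h := continuous_emb B hc
    rw [continuous_iff_le_induced] at h
    exact h
  · apply le_generateFrom
    rintro U ⟨Y, hY, rfl⟩
    refine ⟨{f : ↥B → Bool | f ⟨Y, hY⟩ = true}, ?_, ?_⟩
    · apply Continuous.isOpen_preimage
        (continuous_apply (A := fun _ : ↥B => Bool) ⟨Y, hY⟩) ({true} : Set Bool)
      exact isOpen_discrete _
    · ext p; simp [emb_eq_true_iff]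

lemma injective_emb : Function.Injective (emb B) := by
  intro p q h
  apply Subtype.ext
  ext Y
  constructor
  · intro hY
    have h1 : emb B p ⟨Y, p.2.1 hY⟩ = true := emb_eq_true_iff B |>.2 hY
    rw [h] at h1
    exact emb_eq_true_iff B |>.1 h1
  · intro hY
    have h1 : emb B q ⟨Y, q.2.1 hY⟩ = true := emb_eq_true_iff B |>.2 hY
    rw [← h] at h1
    exact emb_eq_true_iff B |>.1 h1

omit hc in
lemma isClosed_tri {ι : Type*} (a b c : ι) (P : Bool → Bool → Bool → Prop) :
    IsClosed {f : ι → Bool | P (f a) (f b) (f c)} := by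
  have : {f : ι → Bool | P (f a) (f b) (f c)} =
      (fun f : ι → Bool => (f a, f b, f c)) ⁻¹' {t : Bool × Bool × Bool | P t.1 t.2.1 t.2.2} :=
    rfl
  rw [this]
  exact (isClosed_discrete _).preimage
    (((continuous_apply a).prodMk ((continuous_apply b).prodMk (continuous_apply c))))

variable (hu : Set.univ ∈ B) (hi : ∀ Y ∈ B, ∀ Z ∈ B, Y ∩ Z ∈ B)
include hu hi

lemma empty_mem_B' : (∅ : Set α) ∈ B := by
  have := hc _ hu; simpa using this

lemma isClosed_range_emb : IsClosed (Set.range (emb B)) := by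
  have hrange : Set.range (emb B) =
      {f : ↥B → Bool | f ⟨Set.univ, hu⟩ = true} ∩
      {f : ↥B → Bool | f ⟨∅, empty_mem_B' B hc hu hi⟩ = false} ∩
      (⋂ (Y : ↥B) (Z : ↥B),
        {f : ↥B → Bool | f Y = true → f Z = true → f ⟨Y.1 ∩ Z.1, hi _ Y.2 _ Z.2⟩ = true}) ∩
      (⋂ (Y : ↥B) (Z : ↥B) (_ : Y.1 ⊆ Z.1), {f : ↥B → Bool | f Y = true → f Z = true}) ∩
      (⋂ (Y : ↥B), {f : ↥B → Bool | f Y = true ∨ f ⟨Y.1ᶜ, hc _ Y.2⟩ = true}) := by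
    apply Set.Subset.antisymm
    · rintro f ⟨p, rfl⟩
      obtain ⟨hsub, huniv', hemp, hint, hup, hdich⟩ := p.2
      refine ⟨⟨⟨⟨?_, ?_⟩, ?_⟩, ?_⟩, ?_⟩
      · exact (emb_eq_true_iff B).2 huniv'
      · exact (emb_eq_false_iff B).2 hemp
      · simp only [Set.mem_iInter, Set.mem_setOf_eq]
        intro Y Z h1 h2
        exact (emb_eq_true_iff B).2
          (hint _ ((emb_eq_true_iff B).1 h1) _ ((emb_eq_true_iff B).1 h2))
      · simp only [Set.mem_iInter, Set.mem_setOf_eq]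
        intro Y Z hYZ h1
        exact (emb_eq_true_iff B).2 (hup _ ((emb_eq_true_iff B).1 h1) _ Z.2 hYZ)
      · simp only [Set.mem_iInter, Set.mem_setOf_eq]
        intro Y
        rcases hdich _ Y.2 with h | h
        · exact Or.inl ((emb_eq_true_iff B).2 h)
        · exact Or.inr ((emb_eq_true_iff B).2 h)
    · rintro f ⟨⟨⟨⟨h1, h2⟩, h3⟩, h4⟩, h5⟩
      simp only [Set.mem_iInter, Set.mem_setOf_eq] at h3 h4 h5
      set q : Set (Set α) := {Y | ∃ h : Y ∈ B, f ⟨Y, h⟩ = true} with hq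
      have hqB : q ⊆ B := fun Y hY => hY.1
      have hult : IsUltraOn B q := by
        refine ⟨hqB, ⟨hu, h1⟩, ?_, ?_, ?_, ?_⟩
        · rintro ⟨h, hf⟩
          exact absurd (hf.symm.trans h2) (by simp)
        · rintro Y ⟨hY, hfY⟩ Z ⟨hZ, hfZ⟩
          exact ⟨hi _ hY _ hZ, h3 ⟨Y, hY⟩ ⟨Z, hZ⟩ hfY hfZ⟩
        · rintro Y ⟨hY, hfY⟩ Z hZ hYZ
          exact ⟨hZ, h4 ⟨Y, hY⟩ ⟨Z, hZ⟩ hYZ hfY⟩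
        · intro Y hY
          rcases h5 ⟨Y, hY⟩ with h | h
          · exact Or.inl ⟨hY, h⟩
          · exact Or.inr ⟨hc _ hY, h⟩
      refine ⟨⟨q, hult⟩, ?_⟩
      funext Y
      by_cases hfY : f Y = true
      · rw [(emb_eq_true_iff B (p := ⟨q, hult⟩)).2 ⟨Y.2, by rwa [Subtype.coe_eta]⟩, hfY]
      · rw [Bool.not_eq_true] at hfY
        rw [(emb_eq_false_iff B (p := ⟨q, hult⟩)).2 ?_, hfY]
        rintro ⟨h, hf⟩
        exact absurd (hf.symm.trans hfY) (by simp)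
  rw [hrange]
  refine IsClosed.inter (IsClosed.inter (IsClosed.inter (IsClosed.inter ?_ ?_) ?_) ?_) ?_
  · exact isClosed_tri (⟨Set.univ, hu⟩ : ↥B) ⟨Set.univ, hu⟩ ⟨Set.univ, hu⟩
      (fun a _ _ => a = true)
  · exact isClosed_tri (⟨∅, empty_mem_B' B hc hu hi⟩ : ↥B) ⟨∅, empty_mem_B' B hc hu hi⟩
      ⟨∅, empty_mem_B' B hc hu hi⟩ (fun a _ _ => a = false)
  · exact isClosed_iInter fun Y => isClosed_iInter fun Z =>
      isClosed_tri Y Z ⟨Y.1 ∩ Z.1, hi _ Y.2 _ Z.2⟩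
        (fun a b c => a = true → b = true → c = true)
  · exact isClosed_iInter fun Y => isClosed_iInter fun Z => isClosed_iInter fun _ =>
      isClosed_tri Y Z Z (fun a b _ => a = true → b = true)
  · exact isClosed_iInter fun Y =>
      isClosed_tri Y (⟨Y.1ᶜ, hc _ Y.2⟩ : ↥B) Y (fun a b _ => a = true ∨ b = true)

lemma compactSpace_stone : CompactSpace (StoneS B) := by
  have hce : Topology.IsClosedEmbedding (emb B) :=
    ⟨⟨inducing_emb B hc, injective_emb B hc⟩, isClosed_range_emb B hc hu hi⟩
  exact hce.compactSpace

end topo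


/-- Pestov-type characterization: under definability of types, `G` has a fixed
ultrafilter in the Stone space of `B` iff every left generic `Y ∈ B` satisfies
`Y Y⁻¹ = G`. -/
theorem stmt_17 {G : Type*} [Group G] (B : Set (Set G)) (hB : IsInvBoolAlg B)
    (hdef : ∀ p : StoneS B, ∀ Y ∈ B, {h : G | Y ∈ actUF h p.1} ∈ B) :
    (∃ p : StoneS B, ∀ g : G, actUF g p.1 = p.1) ↔
      ∀ Y ∈ B, IsLeftGeneric Y → MulInvSet Y = Set.univ := by
  constructor
  · rintro ⟨p, hfix⟩ Y hYB ⟨F, hF⟩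
    have hex : ∃ g ∈ F, LTrans g Y ∈ p.1 := by
      by_contra hcon
      push_neg at hcon
      have hmem : ∀ g ∈ F, (LTrans g Y)ᶜ ∈ p.1 := fun g hg =>
        (ultra_compl_mem p.2 (hB.2.2.2 g _ hYB)).2 (hcon g hg)
      have h1 : ⋂ g ∈ F, (LTrans g Y)ᶜ ∈ p.1 := biInter_mem p.2 F _ hmem
      have h2 : ⋂ g ∈ F, (LTrans g Y)ᶜ = (∅ : Set G) := by
        rw [← Set.compl_iUnion₂, hF, Set.compl_univ]
      rw [h2] at h1
      exact p.2.2.2.1 h1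
    obtain ⟨g, _, hgY⟩ := hex
    have hYp : Y ∈ p.1 := by
      have hf := hfix g⁻¹
      have h3 : Y ∈ actUF g⁻¹ p.1 := by
        show LTrans g⁻¹⁻¹ Y ∈ p.1
        rwa [inv_inv]
      rwa [hf] at h3
    have htrans : ∀ x : G, LTrans x Y ∈ p.1 := by
      intro x
      have h4 : Y ∈ actUF x⁻¹ p.1 := by rw [hfix x⁻¹]; exact hYp
      have h5 : LTrans x⁻¹⁻¹ Y ∈ p.1 := h4
      rwa [inv_inv] at h5
    apply Set.eq_univ_of_forall
    intro x
    have h5 : Y ∩ LTrans x Y ∈ p.1 := p.2.2.2.2.1 _ hYp _ (htrans x)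
    have h6 : Y ∩ LTrans x Y ≠ ∅ := fun he => p.2.2.2.1 (he ▸ h5)
    obtain ⟨a, haY, haX⟩ := Set.nonempty_iff_ne_empty.2 h6
    rw [mem_LTrans] at haX
    exact ⟨a, haY, x⁻¹ * a, haX, by group⟩
  · intro hgen
    haveI hcS : CompactSpace (StoneS B) := compactSpace_stone B hB.2.1 hB.1 hB.2.2.1
    have hact : ∀ (q : StoneS B) (g : G), IsUltraOn B (actUF g q.1) :=
      fun q g => actUF_ultra hB q.2 g
    have hmemflow : ∀ (M : Set (StoneS B)),
        (∀ (g : G), ∀ q ∈ M, ∃ q' ∈ M, q'.1 = actUF g q.1) →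
        ∀ (g : G), ∀ q ∈ M, (⟨actUF g q.1, hact q g⟩ : StoneS B) ∈ M := by
      intro M hM g q hq
      obtain ⟨q', hq', he⟩ := hM g q hq
      have hqe : q' = ⟨actUF g q.1, hact q g⟩ := Subtype.ext he
      rwa [hqe] at hq'
    have hwhole : IsSubflow B Set.univ := by
      refine ⟨⟨⟨{Y | Y ∈ B ∧ (1 : G) ∈ Y}, principal_ultra hB 1⟩, trivial⟩, isClosed_univ, ?_⟩
      intro g q _
      exact ⟨⟨actUF g q.1, hact q g⟩, trivial, rfl⟩
    have hchain : ∀ c ⊆ {M : Set (StoneS B) | IsSubflow B M}, IsChain (· ⊆ ·) c → c.Nonempty →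
        ∃ lb ∈ {M : Set (StoneS B) | IsSubflow B M}, ∀ s ∈ c, lb ⊆ s := by
      intro c hcS' hch hcne
      haveI : Nonempty ↥c := hcne.to_subtype
      refine ⟨⋂₀ c, ⟨?_, isClosed_sInter fun U hU => (hcS' hU).2.1, ?_⟩,
        fun s hs => Set.sInter_subset_of_mem hs⟩
      · apply IsCompact.nonempty_sInter_of_directed_nonempty_isCompact_isClosed
        · intro x hx y hy
          rcases eq_or_ne x y with rfl | hne
          · exact ⟨x, hx, subset_rfl, subset_rfl⟩
          · rcases hch hx hy hne with h | h
            · exact ⟨x, hx, subset_rfl, h⟩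
            · exact ⟨y, hy, h, subset_rfl⟩
        · exact fun U hU => (hcS' hU).1
        · exact fun U hU => (hcS' hU).2.1.isCompact
        · exact fun U hU => (hcS' hU).2.1
      · intro g q hq
        refine ⟨⟨actUF g q.1, hact q g⟩, ?_, rfl⟩
        exact Set.mem_sInter.2 fun U hU =>
          hmemflow U (hcS' hU).2.2 g q (Set.mem_sInter.1 hq U hU)
    obtain ⟨M, -, hMmin⟩ := zorn_superset_nonempty {M : Set (StoneS B) | IsSubflow B M}
      hchain Set.univ hwhole
    have hMS : IsSubflow B M := hMmin.1
    obtain ⟨p, hpM⟩ := hMS.1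
    have hkey : ∀ Z ∈ p.1, IsLeftGeneric {h : G | Z ∈ actUF h p.1} := by
      intro Z hZp
      have hZB : Z ∈ B := p.2.1 hZp
      set U : G → Set (StoneS B) := fun g => {q : StoneS B | LTrans g Z ∈ q.1} with hU
      have hUopen : ∀ g, IsOpen (U g) := fun g => isOpen_basic B (hB.2.2.2 g _ hZB)
      have hMW : M ⊆ ⋃ g, U g := by
        by_contra hnc
        rw [Set.not_subset] at hnc
        obtain ⟨q0, hq0M, hq0W⟩ := hnc
        have hM' : IsSubflow B (M \ ⋃ g, U g) := by
          refine ⟨⟨q0, hq0M, hq0W⟩, hMS.2.1.sdiff (isOpen_iUnion hUopen), ?_⟩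
          intro g q hq
          refine ⟨⟨actUF g q.1, hact q g⟩, ⟨hmemflow M hMS.2.2 g q hq.1, ?_⟩, rfl⟩
          intro hmem
          apply hq.2
          rw [Set.mem_iUnion] at hmem ⊢
          obtain ⟨g', hg'⟩ := hmem
          refine ⟨g⁻¹ * g', ?_⟩
          show LTrans (g⁻¹ * g') Z ∈ q.1
          rw [← LTrans_LTrans]
          exact hg'
        have hMM := hMmin.2 hM' Set.diff_subset
        have hpW : p ∈ ⋃ g, U g :=
          Set.mem_iUnion.2 ⟨1, show LTrans 1 Z ∈ p.1 by rwa [LTrans_one]⟩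
        exact (hMM hpM).2 hpW
      obtain ⟨F, hF⟩ := hMS.2.1.isCompact.elim_finite_subcover U hUopen hMW
      refine ⟨F, ?_⟩
      apply Set.eq_univ_of_forall
      intro h
      have hhp : (⟨actUF h p.1, hact p h⟩ : StoneS B) ∈ M := hmemflow M hMS.2.2 h p hpM
      obtain ⟨g, hgF, hg⟩ := Set.mem_iUnion₂.1 (hF hhp)
      rw [Set.mem_iUnion₂]
      refine ⟨g, hgF, ?_⟩
      rw [mem_LTrans]
      show Z ∈ actUF (g⁻¹ * h) p.1
      show LTrans (g⁻¹ * h)⁻¹ Z ∈ p.1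
      rw [mul_inv_rev, inv_inv]
      have hg2 : LTrans h⁻¹ (LTrans g Z) ∈ p.1 := hg
      rwa [LTrans_LTrans] at hg2
    refine ⟨p, ?_⟩
    have hsub : ∀ g : G, p.1 ⊆ actUF g p.1 := by
      intro g Y hYp
      by_contra hne
      have hne' : LTrans g⁻¹ Y ∉ p.1 := hne
      have hYB : Y ∈ B := p.2.1 hYp
      have htr : LTrans g⁻¹ Y ∈ B := hB.2.2.2 g⁻¹ _ hYB
      have hcomp : (LTrans g⁻¹ Y)ᶜ ∈ p.1 := (ultra_compl_mem p.2 htr).2 hne'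
      set Z := Y ∩ (LTrans g⁻¹ Y)ᶜ with hZdef
      have hZp : Z ∈ p.1 := p.2.2.2.2.1 _ hYp _ hcomp
      have hZB : Z ∈ B := p.2.1 hZp
      set D := {h : G | Z ∈ actUF h p.1} with hDdef
      have hDB : D ∈ B := hdef p Z hZB
      have hDgen : IsLeftGeneric D := hkey Z hZp
      have hDuniv := hgen D hDB hDgen
      have hginv : g⁻¹ ∈ MulInvSet D := by rw [hDuniv]; trivial
      obtain ⟨a, haD, b, hbD, hab⟩ := hginv
      have ha' : LTrans a⁻¹ Z ∈ p.1 := haD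
      have hb' : LTrans b⁻¹ Z ∈ p.1 := hbD
      have ha2 : a = g⁻¹ * b := by rw [hab, inv_mul_cancel_right]
      have hax : a⁻¹ = b⁻¹ * g := by rw [ha2, mul_inv_rev, inv_inv]
      rw [hax, ← LTrans_LTrans] at ha'
      have hint : LTrans b⁻¹ (LTrans g Z) ∩ LTrans b⁻¹ Z ∈ p.1 := p.2.2.2.2.1 _ ha' _ hb'
      rw [← LTrans_inter] at hint
      have hdisj : LTrans g Z ∩ Z = (∅ : Set G) := by
        ext x
        simp only [Set.mem_inter_iff, Set.mem_empty_iff_false, iff_false, not_and]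
        intro hx1 hx2
        rw [mem_LTrans] at hx1
        exact hx1.2 (by rw [mem_LTrans, inv_inv, mul_inv_cancel_left]; exact hx2.1)
      rw [hdisj, LTrans_empty] at hint
      exact p.2.2.2.1 hint
    intro g
    exact (ultra_eq_of_subset p.2 (hact p g) (hsub g)).symm
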